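/- Let c₀ ∈ ℂ^r, d₀ ∈ ℂ^s, q ∈ ℂ. The following are equivalent: (1) there exist C, N > 0 such that |1 − e^{±2πi(⟨c₀,ξ⟩+⟨d₀,α⟩−iq)}| ≥ C(|ξ|+|ℓ|)^{−N} for all ξ ∈ ℤ^r, ℓ ∈ (½ℕ₀)^s, α ∈ (½ℤ)^s with −ℓ ≤ α ≤ ℓ, ℓ−α ∈ ℕ₀^s, ⟨c₀,ξ⟩+⟨d₀,α⟩−iq ∉ ℤ and (ξ,ℓ) ≠ 0; (2) there exist M, N' > 0 such that |τ + ⟨c₀,ξ⟩ + ⟨d₀,α⟩ − iq| ≥ M(|τ|+|ξ|+|ℓ|)^{−N'} for all τ ∈ ℤ, ξ ∈ ℤ^r, ℓ ∈ (½ℕ₀)^s, α as above with (τ,ξ,ℓ) ≠ 0 and the left-hand side nonzero. -/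

import Mathlib

open Complex


lemma intDist (w : ℂ) : ∃ δ > (0:ℝ), ∀ τ : ℤ, (τ:ℂ) + w ≠ 0 → δ ≤ ‖((τ:ℂ) + w)‖ := by
  classical
  set R : ℤ := ⌈‖w‖⌉ + 1 with hR
  have hwR : ‖w‖ + 1 ≤ (R:ℝ) := by
    rw [hR]; push_cast; linarith [Int.le_ceil (‖w‖)]
  have hRnn : (0:ℤ) ≤ R := by
    have := norm_nonneg w
    have : (0:ℝ) ≤ (R:ℝ) := by linarith
    exact_mod_cast this
  have hne : (Finset.Icc (-R) R).Nonempty := ⟨0, by simp [Finset.mem_Icc]; omega⟩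
  set f : ℤ → ℝ := fun τ => if (τ:ℂ) + w = 0 then 1 else ‖((τ:ℂ)+w)‖ with hf
  refine ⟨min 1 ((Finset.Icc (-R) R).inf' hne f), lt_min one_pos ?_, ?_⟩
  · rw [Finset.lt_inf'_iff]
    intro b _
    by_cases h : ((b:ℂ) + w = 0) <;> simp only [hf, h, if_true, if_false]
    · norm_num
    · exact norm_pos_iff.mpr h
  · intro τ hτ
    by_cases hmem : τ ∈ Finset.Icc (-R) R
    · refine le_trans (min_le_right _ _) ?_
      have h2 := Finset.inf'_le f hmem
      refine le_trans h2 ?_; simp [hf, hτ]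
    · refine le_trans (min_le_left _ _) ?_
      simp only [Finset.mem_Icc, not_and_or, not_le] at hmem
      have h1 : (R:ℝ) + 1 ≤ |(τ:ℝ)| := by
        have : R + 1 ≤ |τ| := by
          rcases hmem with h|h
          · rw [abs_of_nonpos (by omega)]; omega
          · rw [_root_.abs_of_nonneg (by omega)]; omega
        calc (R:ℝ) + 1 = ((R+1 : ℤ) : ℝ) := by push_cast; ring
        _ ≤ ((|τ| : ℤ) : ℝ) := by exact_mod_cast this
        _ = |(τ:ℝ)| := by push_cast; ring
      have h2 : |(τ:ℝ)| ≤ ‖((τ:ℂ)+w)‖ + ‖w‖ := by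
        calc |(τ:ℝ)| = ‖(τ:ℂ)‖ := (Complex.norm_intCast τ).symm
        _ = ‖(((τ:ℂ)+w) - w)‖ := by ring_nf
        _ ≤ _ := norm_sub_le _ _
      linarith

lemma exp_shift (Z : ℂ) (τ : ℤ) :
    Complex.exp ((2*Real.pi:ℝ) * Complex.I * (Z + (τ:ℂ))) =
      Complex.exp ((2*Real.pi:ℝ) * Complex.I * Z) := by
  rw [mul_add, Complex.exp_add,
    show ((2*Real.pi:ℝ):ℂ) * Complex.I * (τ:ℂ) = (τ:ℂ) * (2 * (Real.pi:ℂ) * Complex.I) by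
      push_cast; ring,
    Complex.exp_int_mul_two_pi_mul_I, mul_one]

lemma exp_arg_re (Z : ℂ) : (((2*Real.pi:ℝ):ℂ) * Complex.I * Z).re = -(2*Real.pi*Z.im) := by
  simp [Complex.mul_re, Complex.mul_im]

lemma exp_arg_im (Z : ℂ) : (((2*Real.pi:ℝ):ℂ) * Complex.I * Z).im = 2*Real.pi*Z.re := by
  simp [Complex.mul_re, Complex.mul_im]

lemma lemD (Z : ℂ) (h : 1 ≤ |Z.im|) :
    1/2 ≤ ‖(1 - Complex.exp ((2*Real.pi:ℝ) * Complex.I * Z))‖ := by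
  have h1 : |‖(1:ℂ)‖ - ‖(Complex.exp ((2*Real.pi:ℝ) * Complex.I * Z))‖|
      ≤ ‖(1 - Complex.exp ((2*Real.pi:ℝ) * Complex.I * Z))‖ :=
    abs_norm_sub_norm_le _ _
  rw [Complex.norm_exp, exp_arg_re, norm_one] at h1
  refine le_trans ?_ h1
  set g := Real.exp (-(2*Real.pi*Z.im)) with hg
  have hgpos : 0 < g := Real.exp_pos _
  rcases le_or_gt 1 Z.im with hz | hz
  · have hgle : g ≤ 1/2 := by
      have : g ≤ Real.exp (-1) := by
        apply Real.exp_le_exp.mpr; nlinarith [Real.pi_gt_three]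
      have he : Real.exp (-1) ≤ 1/2 := by
        rw [Real.exp_neg, inv_le_comm₀ (Real.exp_pos 1) (by norm_num)]
        linarith [Real.add_one_le_exp 1]
      linarith
    rw [_root_.abs_of_nonneg (by linarith)]; linarith
  · have hz' : Z.im ≤ -1 := by
      rcases abs_cases Z.im with ⟨h1', _⟩ | ⟨h1', _⟩ <;> linarith
    have h2 : Real.exp 1 ≤ g := by
      apply Real.exp_le_exp.mpr; nlinarith [Real.pi_gt_three]
    have h3 : (2:ℝ) ≤ g := by nlinarith [Real.add_one_le_exp 1]
    rw [_root_.abs_of_nonpos (by linarith)]; linarith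

set_option maxHeartbeats 800000 in
lemma lemB (u : ℂ) (hx : |u.re| ≤ 1/2) (hy : |u.im| ≤ 1) :
    ‖u‖ / 300 ≤ ‖(1 - Complex.exp ((2*Real.pi:ℝ) * Complex.I * u))‖ := by
  have pi3 := Real.pi_gt_three
  have pile := Real.pi_le_four
  set x := u.re with hxd
  set y := u.im with hyd
  set E := ‖(1 - Complex.exp ((2*Real.pi:ℝ) * Complex.I * u))‖ with hE
  have hEnn : 0 ≤ E := norm_nonneg _
  have hwre : (((2*Real.pi:ℝ):ℂ) * Complex.I * u).re = -(2*Real.pi*y) := by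
    simp [Complex.mul_re, Complex.mul_im, hyd]
  have hwim : (((2*Real.pi:ℝ):ℂ) * Complex.I * u).im = 2*Real.pi*x := by
    simp [Complex.mul_re, Complex.mul_im, hxd]
  set g := Real.exp (-(2*Real.pi*y)) with hg
  have hgpos : 0 < g := Real.exp_pos _
  have hMod : |1 - g| ≤ E := by
    have h1 := abs_norm_sub_norm_le 1 (Complex.exp ((2*Real.pi:ℝ) * Complex.I * u))
    rwa [Complex.norm_exp, hwre, norm_one] at h1
  have hIm : g * |Real.sin (2*Real.pi*x)| ≤ E := by
    have h1 := Complex.abs_im_le_norm (1 - Complex.exp ((2*Real.pi:ℝ) * Complex.I * u))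
    rw [Complex.sub_im, Complex.one_im, Complex.exp_im, hwre, hwim] at h1
    calc g * |Real.sin (2*Real.pi*x)| = |0 - Real.exp (-(2*Real.pi*y)) * Real.sin (2*Real.pi*x)| := by
          rw [zero_sub, abs_neg, abs_mul, _root_.abs_of_nonneg hgpos.le]
    _ ≤ E := h1
  have hRe : |1 - g * Real.cos (2*Real.pi*x)| ≤ E := by
    have h1 := Complex.abs_re_le_norm (1 - Complex.exp ((2*Real.pi:ℝ) * Complex.I * u))
    rwa [Complex.sub_re, Complex.one_re, Complex.exp_re, hwre, hwim] at h1
  -- bound from y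
  have hyb : |y| / 2 ≤ E := by
    refine le_trans ?_ hMod
    rcases le_or_gt 0 y with h | h
    · have h1 := Real.add_one_le_exp (2*Real.pi*y)
      have h2 : (0:ℝ) < Real.exp (2*Real.pi*y) := Real.exp_pos _
      have hty : (0:ℝ) ≤ 2*Real.pi*y := by positivity
      have hginv : g = (Real.exp (2*Real.pi*y))⁻¹ := by rw [hg, Real.exp_neg]
      have hyabs : |y| = y := _root_.abs_of_nonneg h
      have hy1 : y ≤ 1 := by rw [← hyabs]; exact hy
      have h5 : 1 ≤ (1 - y/2) * Real.exp (2*Real.pi*y) := by nlinarith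
      have h6 : (Real.exp (2*Real.pi*y))⁻¹ ≤ 1 - y/2 := by
        rw [inv_eq_one_div, div_le_iff₀ h2]; linarith
      have hgle : g ≤ 1 := by
        rw [hginv, inv_le_one_iff₀]; right; linarith
      rw [_root_.abs_of_nonneg (by linarith : (0:ℝ) ≤ 1 - g), hyabs, hginv]
      linarith
    · have hge : -(2*Real.pi*y) + 1 ≤ g := by rw [hg]; exact Real.add_one_le_exp _
      have hyabs : |y| = -y := abs_of_neg h
      have hprod : (0:ℝ) ≤ (-y) * (2*Real.pi - 1) := by
        apply mul_nonneg (by linarith) (by linarith)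
      rw [abs_sub_comm, _root_.abs_of_nonneg (by nlinarith : (0:ℝ) ≤ g - 1), hyabs]
      nlinarith
  have habsu : ‖u‖ ≤ |x| + |y| := Complex.norm_le_abs_re_add_abs_im u
  rcases le_or_gt (1/(2*Real.pi)) |y| with hycase | hycase
  · -- |y| large
    have h2π := (div_le_iff₀ (by positivity : (0:ℝ) < 2*Real.pi)).mp hycase
    have hA : (1:ℝ)/(4*Real.pi) ≤ E := by
      refine le_trans ?_ hyb
      rw [div_le_div_iff₀ (by positivity) (by norm_num)]
      nlinarith
    have hB : ‖u‖ / 300 ≤ 1/(4*Real.pi) := by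
      rw [div_le_div_iff₀ (by norm_num) (by positivity)]
      have h3 : ‖u‖ ≤ 3/2 := by linarith
      nlinarith [norm_nonneg u]
    linarith
  · -- |y| small : g ≥ 1/3
    have habs2 : |y| * (2*Real.pi) < 1 := (lt_div_iff₀ (by positivity)).mp hycase
    have hg13 : 1/3 ≤ g := by
      have h1 : -1 ≤ -(2*Real.pi*y) := by
        rcases abs_cases y with ⟨h2,h3⟩|⟨h2,h3⟩ <;> nlinarith
      have h4 := Real.exp_le_exp.mpr h1
      have h5 : (3:ℝ)⁻¹ ≤ (Real.exp 1)⁻¹ := by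
        apply inv_anti₀ (Real.exp_pos 1)
        linarith [Real.exp_one_lt_d9]
      rw [Real.exp_neg] at h4
      rw [hg]
      calc (1:ℝ)/3 = (3:ℝ)⁻¹ := by norm_num
      _ ≤ (Real.exp 1)⁻¹ := h5
      _ ≤ Real.exp (-(2*Real.pi*y)) := by rw [← Real.exp_neg]; exact Real.exp_le_exp.mpr h1
    rcases le_or_gt |x| (1/4) with hxcase | hxcase
    · -- small x: E ≥ |x|
      have hsin : 4*|x| ≤ |Real.sin (2*Real.pi*x)| := by
        have ht2 : 2*Real.pi*|x| ≤ Real.pi/2 := by nlinarith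
        have ht0 : (0:ℝ) ≤ 2*Real.pi*|x| := by positivity
        have hj := Real.mul_le_sin ht0 ht2
        have hj2 : 4*|x| ≤ Real.sin (2*Real.pi*|x|) := by
          refine le_trans ?_ hj
          rw [div_mul_eq_mul_div, le_div_iff₀ (by positivity)]
          ring_nf
          nlinarith [abs_nonneg x]
        have hsabs : Real.sin (2*Real.pi*|x|) ≤ |Real.sin (2*Real.pi*x)| := by
          rcases abs_cases x with ⟨h2,_⟩|⟨h2,_⟩
          · rw [h2]; exact le_abs_self _
          · rw [h2, show 2*Real.pi*(-x) = -(2*Real.pi*x) by ring, Real.sin_neg]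
            exact neg_le_abs _
        linarith
      have hxb : |x| ≤ E := by
        have := mul_le_mul_of_nonneg_left hsin hgpos.le
        have h7 : (1/3) * (4*|x|) ≤ g * (4*|x|) := by
          apply mul_le_mul_of_nonneg_right hg13 (by positivity)
        nlinarith [abs_nonneg x]
      have : ‖u‖ ≤ 3 * E := by linarith
      linarith
    · -- |x| > 1/4: cos ≤ 0, E ≥ 1
      have hcos : Real.cos (2*Real.pi*x) ≤ 0 := by
        rw [show Real.cos (2*Real.pi*x) = Real.cos |2*Real.pi*x| from (Real.cos_abs _).symm]
        rw [← Real.cos_pi_div_two]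
        apply Real.cos_le_cos_of_nonneg_of_le_pi (by positivity) ?_ ?_
        · rw [abs_mul, _root_.abs_of_nonneg (by positivity : (0:ℝ) ≤ 2*Real.pi)]
          nlinarith
        · rw [abs_mul, _root_.abs_of_nonneg (by positivity : (0:ℝ) ≤ 2*Real.pi)]
          nlinarith
      have hE1 : 1 ≤ E := by
        refine le_trans ?_ hRe
        have h1 : g * Real.cos (2*Real.pi*x) ≤ 0 := mul_nonpos_of_nonneg_of_nonpos hgpos.le hcos
        rw [_root_.abs_of_nonneg (by linarith)]
        linarith
      have : ‖u‖ ≤ 3/2 := by linarith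
      linarith

lemma Shalf {r s : ℕ} (ξ : Fin r → ℤ) (ℓ : Fin s → ℕ) (h : ¬(ξ = 0 ∧ ℓ = 0)) :
    (1/2:ℝ) ≤ (((∑ j, |ξ j| : ℤ)):ℝ) + ∑ k, (ℓ k:ℝ)/2 := by
  have hT : (0:ℝ) ≤ ((∑ j, |ξ j| : ℤ):ℝ) := by
    have : (0:ℤ) ≤ ∑ j, |ξ j| := Finset.sum_nonneg fun i _ => abs_nonneg _
    exact_mod_cast this
  have hL : (0:ℝ) ≤ ∑ k, (ℓ k:ℝ)/2 := Finset.sum_nonneg fun i _ => by positivity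
  rw [not_and_or] at h
  rcases h with h | h
  · obtain ⟨j, hj⟩ := Function.ne_iff.mp h
    have h1 : (1:ℤ) ≤ ∑ i, |ξ i| := by
      calc (1:ℤ) ≤ |ξ j| := Int.one_le_abs (by simpa using hj)
      _ ≤ ∑ i, |ξ i| := Finset.single_le_sum (f := fun i => |ξ i|) (fun i _ => abs_nonneg _) (Finset.mem_univ j)
    have h2 : (1:ℝ) ≤ ((∑ i, |ξ i| : ℤ):ℝ) := by exact_mod_cast h1
    linarith
  · obtain ⟨k, hk⟩ := Function.ne_iff.mp h
    have h1 : (1:ℕ) ≤ ℓ k := Nat.one_le_iff_ne_zero.mpr (by simpa using hk)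
    have h3 : (1:ℝ) ≤ (ℓ k:ℝ) := by exact_mod_cast h1
    have h2 : (ℓ k:ℝ)/2 ≤ ∑ i, (ℓ i:ℝ)/2 :=
      Finset.single_le_sum (f := fun i => (ℓ i:ℝ)/2) (fun i _ => by positivity) (Finset.mem_univ k)
    linarith

lemma sumBound {n : ℕ} (c : Fin n → ℂ) (v : Fin n → ℂ) (T : ℝ)
    (hT : ∀ j, ‖(v j)‖ ≤ T) :
    ‖(∑ j, c j * v j)‖ ≤ (∑ j, ‖(c j)‖) * T := by
  calc ‖(∑ j, c j * v j)‖ ≤ ∑ j, ‖(c j * v j)‖ :=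
        norm_sum_le _ _
  _ = ∑ j, ‖(c j)‖ * ‖(v j)‖ := by simp [norm_mul]
  _ ≤ ∑ j, ‖(c j)‖ * T := Finset.sum_le_sum fun j _ =>
        mul_le_mul_of_nonneg_left (hT j) (norm_nonneg _)
  _ = (∑ j, ‖(c j)‖) * T := by rw [Finset.sum_mul]

lemma rpow_half_le {B N : ℝ} (hB : 1/2 ≤ B) (hN : 0 ≤ N) : B ^ (-N) ≤ 2 ^ N := by
  calc B^(-N) ≤ ((2:ℝ)⁻¹)^(-N) :=
        Real.rpow_le_rpow_of_nonpos (by norm_num) (by linarith) (neg_nonpos.mpr hN)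
  _ = 2^N := by
    rw [Real.inv_rpow (by norm_num : (0:ℝ) ≤ 2), Real.rpow_neg (by norm_num : (0:ℝ) ≤ 2), inv_inv]

section FWD
variable {r s : ℕ} (c₀ : Fin r → ℂ) (d₀ : Fin s → ℂ) (q : ℂ)

set_option maxHeartbeats 1000000 in
lemma fwd :
    (∃ C > (0:ℝ), ∃ N > (0:ℝ),
      ∀ (ξ : Fin r → ℤ) (ℓ : Fin s → ℕ) (α : Fin s → ℤ),
        (∀ k, -(ℓ k : ℤ) ≤ α k) → (∀ k, α k ≤ (ℓ k : ℤ)) →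
        (∀ k, (2:ℤ) ∣ ((ℓ k : ℤ) - α k)) →
        ((∑ j, c₀ j * (ξ j : ℂ)) + (∑ k, d₀ k * ((α k : ℂ) / 2)) - Complex.I * q ∉
          Set.range ((↑·) : ℤ → ℂ)) →
        ¬(ξ = 0 ∧ ℓ = 0) →
        (C * (((∑ j, |ξ j| : ℤ) : ℝ) + ∑ k, (ℓ k : ℝ) / 2) ^ (-N) ≤
          ‖(1 - Complex.exp ((2 * Real.pi : ℝ) * Complex.I *
            ((∑ j, c₀ j * (ξ j : ℂ)) + (∑ k, d₀ k * ((α k : ℂ) / 2)) - Complex.I * q)))‖ ∧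
         C * (((∑ j, |ξ j| : ℤ) : ℝ) + ∑ k, (ℓ k : ℝ) / 2) ^ (-N) ≤
          ‖(1 - Complex.exp (-((2 * Real.pi : ℝ) * Complex.I) *
            ((∑ j, c₀ j * (ξ j : ℂ)) + (∑ k, d₀ k * ((α k : ℂ) / 2)) - Complex.I * q)))‖)) →
    (∃ M > (0:ℝ), ∃ N' > (0:ℝ),
      ∀ (τ : ℤ) (ξ : Fin r → ℤ) (ℓ : Fin s → ℕ) (α : Fin s → ℤ),
        (∀ k, -(ℓ k : ℤ) ≤ α k) → (∀ k, α k ≤ (ℓ k : ℤ)) →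
        (∀ k, (2:ℤ) ∣ ((ℓ k : ℤ) - α k)) →
        ¬(τ = 0 ∧ ξ = 0 ∧ ℓ = 0) →
        (τ : ℂ) + (∑ j, c₀ j * (ξ j : ℂ)) + (∑ k, d₀ k * ((α k : ℂ) / 2)) -
          Complex.I * q ≠ 0 →
        M * ((|τ| : ℝ) + ((∑ j, |ξ j| : ℤ) : ℝ) + ∑ k, (ℓ k : ℝ) / 2) ^ (-N') ≤
          ‖((τ : ℂ) + (∑ j, c₀ j * (ξ j : ℂ)) +
            (∑ k, d₀ k * ((α k : ℂ) / 2)) - Complex.I * q)‖) := by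
  rintro ⟨C, hC, N, hN, H⟩
  obtain ⟨δ, hδ, hδle⟩ := intDist (-(Complex.I*q))
  have hπ : (0:ℝ) < Real.pi := Real.pi_pos
  refine ⟨min 1 (min δ (C/(4*Real.pi))) * (2:ℝ)^(-N) * min 1 (4*Real.pi)⁻¹,
    by positivity, N, hN, ?_⟩
  intro τ ξ ℓ α hα1 hα2 hdiv hne0 hnz
  set Mv := min 1 (min δ (C/(4*Real.pi))) * (2:ℝ)^(-N) * min 1 (4*Real.pi)⁻¹ with hMv
  set z := (∑ j, c₀ j * (ξ j:ℂ)) + (∑ k, d₀ k * ((α k:ℂ)/2)) - Complex.I*q with hz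
  have hzg : (τ:ℂ) + (∑ j, c₀ j * (ξ j:ℂ)) + (∑ k, d₀ k * ((α k:ℂ)/2)) - Complex.I*q
      = (τ:ℂ) + z := by rw [hz]; ring
  set T := ((∑ j, |ξ j| : ℤ):ℝ) with hT
  set L := ∑ k, (ℓ k:ℝ)/2 with hL
  have hT0 : (0:ℝ) ≤ T := by
    rw [hT]
    have : (0:ℤ) ≤ ∑ j, |ξ j| := Finset.sum_nonneg fun i _ => abs_nonneg _
    exact_mod_cast this
  have hL0 : (0:ℝ) ≤ L := Finset.sum_nonneg fun i _ => by positivity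
  have hBeq : (|τ|:ℝ) + T + L = (|τ|:ℝ) + (T + L) := by ring
  rw [hzg, hBeq]
  set S := T + L with hS
  set B := (|τ|:ℝ) + S with hB
  have hS0 : 0 ≤ S := by rw [hS]; linarith
  have hSB : S ≤ B := by
    rw [hB]
    have : (0:ℝ) ≤ (|τ|:ℝ) := by positivity
    linarith
  have hBhalf : (1/2:ℝ) ≤ B := by
    by_cases hτ0 : τ = 0
    · have hξℓ : ¬(ξ = 0 ∧ ℓ = 0) := fun h => hne0 ⟨hτ0, h.1, h.2⟩
      have := Shalf ξ ℓ hξℓ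
      rw [hB, hS, hT, hL]
      have h0 : (0:ℝ) ≤ |((τ:ℤ):ℝ)| := by positivity
      linarith
    · have h1 : (1:ℤ) ≤ |τ| := Int.one_le_abs hτ0
      have h2 : (1:ℝ) ≤ (|τ|:ℝ) := by exact_mod_cast h1
      rw [hB]; linarith
  have hP : (0:ℝ) < (2:ℝ)^(-N) := Real.rpow_pos_of_pos (by norm_num) _
  have hQ : (0:ℝ) < (2:ℝ)^(N) := Real.rpow_pos_of_pos (by norm_num) _
  have hPQ : (2:ℝ)^(-N) * (2:ℝ)^(N) = 1 := by
    rw [← Real.rpow_add (by norm_num)]; simp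
  have hBN : B^(-N) ≤ (2:ℝ)^N := rpow_half_le hBhalf hN.le
  have hBN0 : 0 < B^(-N) := Real.rpow_pos_of_pos (by linarith) _
  have hm1 : (0:ℝ) ≤ min 1 (min δ (C/(4*Real.pi))) := le_min (by norm_num)
    (le_min hδ.le (by positivity))
  have hm2 : (0:ℝ) ≤ min 1 (4*Real.pi)⁻¹ := le_min (by norm_num) (by positivity)
  have hA1 : min 1 (min δ (C/(4*Real.pi))) ≤ 1 := min_le_left _ _
  have hAδ : min 1 (min δ (C/(4*Real.pi))) ≤ δ := le_trans (min_le_right _ _) (min_le_left _ _)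
  have hAC : min 1 (min δ (C/(4*Real.pi))) ≤ C/(4*Real.pi) :=
    le_trans (min_le_right _ _) (min_le_right _ _)
  have hB1' : min 1 (4*Real.pi)⁻¹ ≤ 1 := min_le_left _ _
  have hB2' : min 1 (4*Real.pi)⁻¹ ≤ (4*Real.pi)⁻¹ := min_le_right _ _
  have hPle1 : (2:ℝ)^(-N) ≤ 1 :=
    Real.rpow_le_one_of_one_le_of_nonpos (by norm_num) (by linarith)
  by_cases hzint : z ∈ Set.range ((↑·) : ℤ → ℂ)
  · -- z is an integer
    obtain ⟨m, hm⟩ := hzint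
    have h1 : (τ:ℂ) + z = ((τ+m:ℤ):ℂ) := by rw [← hm]; push_cast; ring
    have hne : τ + m ≠ 0 := by
      intro h; apply hnz; rw [hzg, h1, h]; simp
    have h2 : (1:ℝ) ≤ ‖((τ:ℂ)+z)‖ := by
      rw [h1, Complex.norm_intCast]
      have := Int.one_le_abs hne
      exact_mod_cast this
    have hMle : Mv ≤ (2:ℝ)^(-N) := by
      rw [hMv]
      calc min 1 (min δ (C/(4*Real.pi))) * (2:ℝ)^(-N) * min 1 (4*Real.pi)⁻¹
          ≤ (1 * (2:ℝ)^(-N)) * 1 :=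
            mul_le_mul (mul_le_mul hA1 le_rfl hP.le (by norm_num)) hB1' hm2 (by positivity)
      _ = (2:ℝ)^(-N) := by ring
    calc Mv * B^(-N) ≤ (2:ℝ)^(-N) * (2:ℝ)^N :=
          mul_le_mul hMle hBN hBN0.le hP.le
    _ = 1 := hPQ
    _ ≤ _ := h2
  · by_cases hξℓ : ξ = 0 ∧ ℓ = 0
    · -- z = -Iq
      have hα0 : ∀ k, α k = 0 := by
        intro k
        have h1 := hα1 k; have h2 := hα2 k
        rw [hξℓ.2] at h1 h2
        simp at h1 h2
        omega
      have hzq : z = -(Complex.I*q) := by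
        rw [hz, hξℓ.1]
        have : ∀ k, d₀ k * ((α k:ℂ)/2) = 0 := by intro k; rw [hα0 k]; simp
        simp [this]
      have hτ0 : τ ≠ 0 := fun h => hne0 ⟨h, hξℓ.1, hξℓ.2⟩
      have hτz : (τ:ℂ) + -(Complex.I*q) ≠ 0 := by
        rw [← hzq]; rw [hzg] at hnz; exact hnz
      have hbd := hδle τ hτz
      have hS00 : S = 0 := by
        rw [hS, hT, hL, hξℓ.1, hξℓ.2]
        simp
      have hB1 : (1:ℝ) ≤ B := by
        rw [hB, hS00]
        have h1 : (1:ℤ) ≤ |τ| := Int.one_le_abs hτ0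
        have h2 : (1:ℝ) ≤ (|τ|:ℝ) := by exact_mod_cast h1
        linarith
      have hBN1 : B^(-N) ≤ 1 := Real.rpow_le_one_of_one_le_of_nonpos hB1 (by linarith)
      have hMle : Mv ≤ δ := by
        rw [hMv]
        calc min 1 (min δ (C/(4*Real.pi))) * (2:ℝ)^(-N) * min 1 (4*Real.pi)⁻¹
            ≤ (δ * 1) * 1 :=
              mul_le_mul (mul_le_mul hAδ hPle1 hP.le hδ.le) hB1' hm2 (by positivity)
        _ = δ := by ring
      calc Mv * B^(-N) ≤ δ * 1 := mul_le_mul hMle hBN1 hBN0.le hδ.le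
      _ = δ := by ring
      _ ≤ ‖((τ:ℂ) + z)‖ := by rw [hzq]; exact hbd
    · -- generic case: use H
      have hShalf : (1/2:ℝ) ≤ S := by rw [hS, hT, hL]; exact Shalf ξ ℓ hξℓ
      have hSpos : (0:ℝ) < S := by linarith
      have HH := (H ξ ℓ α hα1 hα2 hdiv hzint hξℓ).1
      rw [← hz, ← hT, ← hL, ← hS] at HH
      have hSN : B^(-N) ≤ S^(-N) :=
        Real.rpow_le_rpow_of_nonpos hSpos hSB (by linarith)
      by_cases hsmall : ‖((τ:ℂ)+z)‖ < (4*Real.pi)⁻¹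
      · -- small distance: use exponential bound
        have hexpeq : Complex.exp ((2*Real.pi:ℝ) * Complex.I * z)
            = Complex.exp ((2*Real.pi:ℝ) * Complex.I * (z + (τ:ℂ))) := (exp_shift z τ).symm
        have habsarg : ‖(((2*Real.pi:ℝ):ℂ) * Complex.I * (z + (τ:ℂ)))‖
            = 2*Real.pi * ‖((τ:ℂ)+z)‖ := by
          rw [norm_mul, norm_mul, Complex.norm_I, Complex.norm_real, Real.norm_eq_abs,
            _root_.abs_of_nonneg (by positivity : (0:ℝ) ≤ 2*Real.pi), mul_one,
            add_comm z (τ:ℂ)]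
        have hargle : ‖(((2*Real.pi:ℝ):ℂ) * Complex.I * (z + (τ:ℂ)))‖ ≤ 1 := by
          rw [habsarg]
          have h5 : 2*Real.pi * ‖((τ:ℂ)+z)‖ ≤ 2*Real.pi * (4*Real.pi)⁻¹ := by
            apply mul_le_mul_of_nonneg_left hsmall.le (by positivity)
          have h6 : 2*Real.pi * (4*Real.pi)⁻¹ = 1/2 := by field_simp; ring
          linarith
        have hub : ‖(1 - Complex.exp ((2*Real.pi:ℝ) * Complex.I * z))‖
            ≤ 4*Real.pi * ‖((τ:ℂ)+z)‖ := by
          rw [hexpeq, norm_sub_rev]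
          calc ‖(Complex.exp (((2*Real.pi:ℝ):ℂ) * Complex.I * (z + (τ:ℂ))) - 1)‖
              ≤ 2 * ‖(((2*Real.pi:ℝ):ℂ) * Complex.I * (z + (τ:ℂ)))‖ :=
                Complex.norm_exp_sub_one_le hargle
          _ = 4*Real.pi * ‖((τ:ℂ)+z)‖ := by rw [habsarg]; ring
        have hlow : C * S^(-N) ≤ 4*Real.pi * ‖((τ:ℂ)+z)‖ := le_trans HH hub
        have hMle : Mv ≤ C/(4*Real.pi) := by
          rw [hMv]
          calc min 1 (min δ (C/(4*Real.pi))) * (2:ℝ)^(-N) * min 1 (4*Real.pi)⁻¹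
              ≤ ((C/(4*Real.pi)) * 1) * 1 :=
                mul_le_mul (mul_le_mul hAC hPle1 hP.le (by positivity)) hB1' hm2 (by positivity)
          _ = C/(4*Real.pi) := by ring
        have hSN0 : 0 < S^(-N) := Real.rpow_pos_of_pos hSpos _
        calc Mv * B^(-N) ≤ (C/(4*Real.pi)) * S^(-N) :=
              mul_le_mul hMle hSN hBN0.le (by positivity)
        _ ≤ ‖((τ:ℂ)+z)‖ := by
          rw [div_mul_eq_mul_div, div_le_iff₀ (by positivity : (0:ℝ) < 4*Real.pi)]
          linarith [hlow]
      · -- large distance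
        push_neg at hsmall
        have hMle : Mv ≤ (2:ℝ)^(-N) * (4*Real.pi)⁻¹ := by
          rw [hMv]
          calc min 1 (min δ (C/(4*Real.pi))) * (2:ℝ)^(-N) * min 1 (4*Real.pi)⁻¹
              ≤ (1 * (2:ℝ)^(-N)) * (4*Real.pi)⁻¹ :=
                mul_le_mul (mul_le_mul hA1 le_rfl hP.le (by norm_num)) hB2' hm2 (by positivity)
          _ = (2:ℝ)^(-N) * (4*Real.pi)⁻¹ := by ring
        calc Mv * B^(-N) ≤ ((2:ℝ)^(-N) * (4*Real.pi)⁻¹) * (2:ℝ)^N :=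
              mul_le_mul hMle hBN hBN0.le (by positivity)
        _ = (4*Real.pi)⁻¹ * ((2:ℝ)^(-N) * (2:ℝ)^N) := by ring
        _ = (4*Real.pi)⁻¹ := by rw [hPQ]; ring
        _ ≤ _ := hsmall

end FWD

section BWD
variable {r s : ℕ} (c₀ : Fin r → ℂ) (d₀ : Fin s → ℂ) (q : ℂ)

set_option maxHeartbeats 1000000 in
lemma bwd :
    (∃ M > (0:ℝ), ∃ N' > (0:ℝ),
      ∀ (τ : ℤ) (ξ : Fin r → ℤ) (ℓ : Fin s → ℕ) (α : Fin s → ℤ),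
        (∀ k, -(ℓ k : ℤ) ≤ α k) → (∀ k, α k ≤ (ℓ k : ℤ)) →
        (∀ k, (2:ℤ) ∣ ((ℓ k : ℤ) - α k)) →
        ¬(τ = 0 ∧ ξ = 0 ∧ ℓ = 0) →
        (τ : ℂ) + (∑ j, c₀ j * (ξ j : ℂ)) + (∑ k, d₀ k * ((α k : ℂ) / 2)) -
          Complex.I * q ≠ 0 →
        M * ((|τ| : ℝ) + ((∑ j, |ξ j| : ℤ) : ℝ) + ∑ k, (ℓ k : ℝ) / 2) ^ (-N') ≤
          ‖((τ : ℂ) + (∑ j, c₀ j * (ξ j : ℂ)) +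
            (∑ k, d₀ k * ((α k : ℂ) / 2)) - Complex.I * q)‖) →
    (∃ C > (0:ℝ), ∃ N > (0:ℝ),
      ∀ (ξ : Fin r → ℤ) (ℓ : Fin s → ℕ) (α : Fin s → ℤ),
        (∀ k, -(ℓ k : ℤ) ≤ α k) → (∀ k, α k ≤ (ℓ k : ℤ)) →
        (∀ k, (2:ℤ) ∣ ((ℓ k : ℤ) - α k)) →
        ((∑ j, c₀ j * (ξ j : ℂ)) + (∑ k, d₀ k * ((α k : ℂ) / 2)) - Complex.I * q ∉
          Set.range ((↑·) : ℤ → ℂ)) →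
        ¬(ξ = 0 ∧ ℓ = 0) →
        (C * (((∑ j, |ξ j| : ℤ) : ℝ) + ∑ k, (ℓ k : ℝ) / 2) ^ (-N) ≤
          ‖(1 - Complex.exp ((2 * Real.pi : ℝ) * Complex.I *
            ((∑ j, c₀ j * (ξ j : ℂ)) + (∑ k, d₀ k * ((α k : ℂ) / 2)) - Complex.I * q)))‖ ∧
         C * (((∑ j, |ξ j| : ℤ) : ℝ) + ∑ k, (ℓ k : ℝ) / 2) ^ (-N) ≤
          ‖(1 - Complex.exp (-((2 * Real.pi : ℝ) * Complex.I) *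
            ((∑ j, c₀ j * (ξ j : ℂ)) + (∑ k, d₀ k * ((α k : ℂ) / 2)) - Complex.I * q)))‖)) := by
  rintro ⟨M, hM, N', hN', H⟩
  have hπ : (0:ℝ) < Real.pi := Real.pi_pos
  set A := (∑ j, ‖(c₀ j)‖) with hA
  set D := (∑ k, ‖(d₀ k)‖) with hD
  have hA0 : 0 ≤ A := Finset.sum_nonneg fun i _ => norm_nonneg _
  have hD0 : 0 ≤ D := Finset.sum_nonneg fun i _ => norm_nonneg _
  set K0 := A + D + 2*‖q‖ + 2 with hK0
  have hK01 : (1:ℝ) ≤ K0 := by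
    have := norm_nonneg q
    rw [hK0]; linarith
  have hK0pos : (0:ℝ) < K0 := by linarith
  refine ⟨min ((2:ℝ)^(-N') * (1/2)) ((M/300) * K0^(-N')), ?_, N', hN', ?_⟩
  · apply lt_min
    · have : (0:ℝ) < (2:ℝ)^(-N') := Real.rpow_pos_of_pos (by norm_num) _
      linarith
    · have : (0:ℝ) < K0^(-N') := Real.rpow_pos_of_pos hK0pos _
      positivity
  intro ξ ℓ α hα1 hα2 hdiv hzint hξℓ
  set Cv := min ((2:ℝ)^(-N') * (1/2)) ((M/300) * K0^(-N')) with hCv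
  set z := (∑ j, c₀ j * (ξ j:ℂ)) + (∑ k, d₀ k * ((α k:ℂ)/2)) - Complex.I*q with hz
  set T := ((∑ j, |ξ j| : ℤ):ℝ) with hT
  set L := ∑ k, (ℓ k:ℝ)/2 with hL
  set S := T + L with hS
  have hT0 : (0:ℝ) ≤ T := by
    rw [hT]
    have : (0:ℤ) ≤ ∑ j, |ξ j| := Finset.sum_nonneg fun i _ => abs_nonneg _
    exact_mod_cast this
  have hL0 : (0:ℝ) ≤ L := Finset.sum_nonneg fun i _ => by positivity
  have hShalf : (1/2:ℝ) ≤ S := by rw [hS, hT, hL]; exact Shalf ξ ℓ hξℓ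
  have hSpos : (0:ℝ) < S := by linarith
  have hSN0 : (0:ℝ) < S^(-N') := Real.rpow_pos_of_pos hSpos _
  have hSNle : S^(-N') ≤ (2:ℝ)^N' := rpow_half_le hShalf hN'.le
  have hP : (0:ℝ) < (2:ℝ)^(-N') := Real.rpow_pos_of_pos (by norm_num) _
  have hPQ : (2:ℝ)^(-N') * (2:ℝ)^(N') = 1 := by
    rw [← Real.rpow_add (by norm_num)]; simp
  rcases le_or_gt 1 |z.im| with him | him
  · -- |Im z| ≥ 1 : both bounds from lemD
    have h1 := lemD z him
    have h2 := lemD (-z) (by rw [Complex.neg_im, abs_neg]; exact him)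
    have hCle : Cv ≤ (2:ℝ)^(-N') * (1/2) := min_le_left _ _
    have hCv0 : 0 ≤ Cv := by
      rw [hCv]
      refine le_min (by positivity) (mul_nonneg (by positivity) (Real.rpow_nonneg hK0pos.le _))
    have hchain : Cv * S^(-N') ≤ 1/2 := by
      calc Cv * S^(-N') ≤ ((2:ℝ)^(-N') * (1/2)) * (2:ℝ)^N' :=
            mul_le_mul hCle hSNle hSN0.le (by positivity)
      _ = ((2:ℝ)^(-N') * (2:ℝ)^N') * (1/2) := by ring
      _ = 1/2 := by rw [hPQ]; ring
    constructor
    · exact le_trans hchain h1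
    · refine le_trans hchain ?_
      have heq : -(((2*Real.pi:ℝ):ℂ) * Complex.I) * z = ((2*Real.pi:ℝ):ℂ) * Complex.I * (-z) := by
        ring
      rw [heq]
      exact h2
  · -- |Im z| < 1
    set τ : ℤ := -round z.re with hτ
    set u := z + (τ:ℂ) with hu
    have hure : u.re = z.re - (round z.re : ℝ) := by
      rw [hu, Complex.add_re, Complex.intCast_re, hτ]
      push_cast
      ring
    have huim : u.im = z.im := by
      rw [hu, Complex.add_im, Complex.intCast_im, add_zero]
    have hux : |u.re| ≤ 1/2 := by rw [hure]; exact abs_sub_round _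
    have huy : |u.im| ≤ 1 := by rw [huim]; linarith [him]
    have hτz : (τ:ℂ) + z ≠ 0 := by
      intro h0
      apply hzint
      refine ⟨-τ, ?_⟩
      have : z = -(τ:ℂ) := by linear_combination h0
      simp [this]
    have hτz' : (τ:ℂ) + (∑ j, c₀ j * (ξ j:ℂ)) + (∑ k, d₀ k * ((α k:ℂ)/2)) - Complex.I*q ≠ 0 := by
      intro h0; apply hτz; rw [← h0, hz]; ring
    have HH := H τ ξ ℓ α hα1 hα2 hdiv (fun h => hξℓ ⟨h.2.1, h.2.2⟩) hτz'
    have hgoal1 : (τ:ℂ) + (∑ j, c₀ j * (ξ j:ℂ)) + (∑ k, d₀ k * ((α k:ℂ)/2)) - Complex.I*q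
        = (τ:ℂ) + z := by rw [hz]; ring
    have hBeq : (|τ|:ℝ) + T + L = (|τ|:ℝ) + S := by rw [hS]; ring
    rw [hgoal1, ← hT, ← hL, hBeq] at HH
    set B := (|τ|:ℝ) + S with hB
    -- bound B ≤ K0 * S
    have hzb : ‖z‖ ≤ (A + D) * S + ‖q‖ := by
      have h1 : ‖(∑ j, c₀ j * (ξ j:ℂ))‖ ≤ A * T := by
        rw [hA]
        apply sumBound
        intro j
        rw [Complex.norm_intCast, hT]
        have h2 : |ξ j| ≤ ∑ i, |ξ i| :=
          Finset.single_le_sum (f := fun i => |ξ i|) (fun i _ => abs_nonneg _) (Finset.mem_univ j)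
        calc |((ξ j : ℤ):ℝ)| = ((|ξ j| : ℤ):ℝ) := by push_cast; ring
        _ ≤ ((∑ i, |ξ i| : ℤ):ℝ) := by exact_mod_cast h2
      have h2 : ‖(∑ k, d₀ k * ((α k:ℂ)/2))‖ ≤ D * L := by
        rw [hD]
        apply sumBound
        intro k
        have h3 : |α k| ≤ (ℓ k : ℤ) := abs_le.mpr ⟨hα1 k, hα2 k⟩
        have h4 : ‖((α k:ℂ)/2)‖ = |((α k:ℤ):ℝ)|/2 := by
          rw [norm_div, Complex.norm_intCast]
          norm_num
        rw [h4, hL]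
        have h5 : |((α k:ℤ):ℝ)| ≤ (ℓ k:ℝ) := by
          calc |((α k:ℤ):ℝ)| = ((|α k| : ℤ):ℝ) := by push_cast; ring
          _ ≤ (((ℓ k:ℤ)):ℝ) := by exact_mod_cast h3
          _ = (ℓ k:ℝ) := by push_cast; ring
        have h6 : (ℓ k:ℝ)/2 ≤ L := by
          rw [hL]
          exact Finset.single_le_sum (f := fun i => (ℓ i:ℝ)/2) (fun i _ => by positivity)
            (Finset.mem_univ k)
        rw [hL] at h6
        linarith
      have h7 : ‖z‖ ≤ ‖(∑ j, c₀ j * (ξ j:ℂ))‖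
          + ‖(∑ k, d₀ k * ((α k:ℂ)/2))‖ + ‖(Complex.I * q)‖ := by
        rw [hz]
        calc ‖((∑ j, c₀ j * (ξ j:ℂ)) + (∑ k, d₀ k * ((α k:ℂ)/2)) - Complex.I*q)‖
            ≤ ‖((∑ j, c₀ j * (ξ j:ℂ)) + (∑ k, d₀ k * ((α k:ℂ)/2)))‖
              + ‖(Complex.I * q)‖ := norm_sub_le _ _
        _ ≤ _ := by
          have := norm_add_le (∑ j, c₀ j * (ξ j:ℂ)) (∑ k, d₀ k * ((α k:ℂ)/2))
          linarith
      have h8 : ‖(Complex.I * q)‖ = ‖q‖ := by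
        rw [norm_mul, Complex.norm_I, one_mul]
      have hAT : A * T ≤ A * S := by
        apply mul_le_mul_of_nonneg_left _ hA0
        rw [hS]; linarith
      have hDL : D * L ≤ D * S := by
        apply mul_le_mul_of_nonneg_left _ hD0
        rw [hS]; linarith
      rw [h8] at h7
      nlinarith
    have hτb : (|τ|:ℝ) ≤ ‖z‖ + 1/2 := by
      have h1 : |(round z.re : ℝ)| - |z.re| ≤ |(round z.re:ℝ) - z.re| :=
        abs_sub_abs_le_abs_sub _ _
      have h2 : |(round z.re:ℝ) - z.re| = |z.re - (round z.re:ℝ)| := abs_sub_comm _ _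
      have h3 := abs_sub_round z.re
      have h4 : |z.re| ≤ ‖z‖ := Complex.abs_re_le_norm z
      have h5 : (|τ|:ℝ) = |(round z.re : ℝ)| := by
        rw [hτ]
        push_cast
        rw [abs_neg]
      linarith
    have hBK : B ≤ K0 * S := by
      rw [hB, hK0]
      have hq0 := norm_nonneg q
      nlinarith
    have hBpos : (0:ℝ) < B := by
      rw [hB]
      have : (0:ℝ) ≤ (|τ|:ℝ) := by positivity
      linarith
    have hBN : (K0 * S)^(-N') ≤ B^(-N') :=
      Real.rpow_le_rpow_of_nonpos hBpos hBK (by linarith)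
    have hKS : (K0 * S)^(-N') = K0^(-N') * S^(-N') :=
      Real.mul_rpow hK0pos.le hSpos.le
    have habsu : M * (K0^(-N') * S^(-N')) ≤ ‖u‖ := by
      rw [← hKS]
      calc M * (K0*S)^(-N') ≤ M * B^(-N') := mul_le_mul_of_nonneg_left hBN hM.le
      _ ≤ ‖((τ:ℂ) + z)‖ := HH
      _ = ‖u‖ := by rw [hu, add_comm]
    have hCle2 : Cv ≤ (M/300) * K0^(-N') := min_le_right _ _
    have hfin : Cv * S^(-N') ≤ ‖u‖ / 300 := by
      have : Cv * S^(-N') ≤ ((M/300) * K0^(-N')) * S^(-N') :=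
        mul_le_mul_of_nonneg_right hCle2 hSN0.le
      calc Cv * S^(-N') ≤ ((M/300) * K0^(-N')) * S^(-N') := this
      _ = (M * (K0^(-N') * S^(-N'))) / 300 := by ring
      _ ≤ ‖u‖ / 300 := by linarith [habsu]
    constructor
    · refine le_trans hfin ?_
      have heq : Complex.exp (((2*Real.pi:ℝ):ℂ) * Complex.I * z)
          = Complex.exp (((2*Real.pi:ℝ):ℂ) * Complex.I * u) := by
        rw [hu]
        exact (exp_shift z τ).symm
      rw [heq]
      exact lemB u hux huy
    · refine le_trans hfin ?_
      have heq : Complex.exp (-(((2*Real.pi:ℝ):ℂ) * Complex.I) * z)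
          = Complex.exp (((2*Real.pi:ℝ):ℂ) * Complex.I * (-u)) := by
        have h1 : -(((2*Real.pi:ℝ):ℂ) * Complex.I) * z = ((2*Real.pi:ℝ):ℂ) * Complex.I * ((-u) + (τ:ℂ)) := by
          rw [hu]; ring
        rw [h1, exp_shift (-u) τ]
      rw [heq]
      have := lemB (-u) (by rw [Complex.neg_re, abs_neg]; exact hux)
        (by rw [Complex.neg_im, abs_neg]; exact huy)
      rwa [norm_neg] at this

end BWD

/-- equivalence of the Diophantine condition on the symbol
`τ + ⟨c₀,ξ⟩ + ⟨d₀,α⟩ − iq` with the lower bound on `|1 − e^{±2πi(⟨c₀,ξ⟩+⟨d₀,α⟩−iq)}|`.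
Half-integers are encoded by their doubles: `ℓ : Fin s → ℕ` encodes `ℓ/2 ∈ (½ℕ₀)^s`
and `α : Fin s → ℤ` encodes `α/2 ∈ (½ℤ)^s`; the constraints `−ℓ ≤ α ≤ ℓ` and
`ℓ − α ∈ ℕ₀^s` become `−ℓ ≤ α ≤ ℓ` and `2 ∣ (ℓ − α)` coordinatewise. -/
theorem stmt13 {r s : ℕ} (c₀ : Fin r → ℂ) (d₀ : Fin s → ℂ) (q : ℂ) :
    (∃ C > (0:ℝ), ∃ N > (0:ℝ),
      ∀ (ξ : Fin r → ℤ) (ℓ : Fin s → ℕ) (α : Fin s → ℤ),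
        (∀ k, -(ℓ k : ℤ) ≤ α k) → (∀ k, α k ≤ (ℓ k : ℤ)) →
        (∀ k, (2:ℤ) ∣ ((ℓ k : ℤ) - α k)) →
        ((∑ j, c₀ j * (ξ j : ℂ)) + (∑ k, d₀ k * ((α k : ℂ) / 2)) - Complex.I * q ∉
          Set.range ((↑·) : ℤ → ℂ)) →
        ¬(ξ = 0 ∧ ℓ = 0) →
        (C * (((∑ j, |ξ j| : ℤ) : ℝ) + ∑ k, (ℓ k : ℝ) / 2) ^ (-N) ≤
          ‖(1 - Complex.exp ((2 * Real.pi : ℝ) * Complex.I *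
            ((∑ j, c₀ j * (ξ j : ℂ)) + (∑ k, d₀ k * ((α k : ℂ) / 2)) - Complex.I * q)))‖ ∧
         C * (((∑ j, |ξ j| : ℤ) : ℝ) + ∑ k, (ℓ k : ℝ) / 2) ^ (-N) ≤
          ‖(1 - Complex.exp (-((2 * Real.pi : ℝ) * Complex.I) *
            ((∑ j, c₀ j * (ξ j : ℂ)) + (∑ k, d₀ k * ((α k : ℂ) / 2)) - Complex.I * q)))‖)) ↔
    (∃ M > (0:ℝ), ∃ N' > (0:ℝ),
      ∀ (τ : ℤ) (ξ : Fin r → ℤ) (ℓ : Fin s → ℕ) (α : Fin s → ℤ),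
        (∀ k, -(ℓ k : ℤ) ≤ α k) → (∀ k, α k ≤ (ℓ k : ℤ)) →
        (∀ k, (2:ℤ) ∣ ((ℓ k : ℤ) - α k)) →
        ¬(τ = 0 ∧ ξ = 0 ∧ ℓ = 0) →
        (τ : ℂ) + (∑ j, c₀ j * (ξ j : ℂ)) + (∑ k, d₀ k * ((α k : ℂ) / 2)) -
          Complex.I * q ≠ 0 →
        M * ((|τ| : ℝ) + ((∑ j, |ξ j| : ℤ) : ℝ) + ∑ k, (ℓ k : ℝ) / 2) ^ (-N') ≤
          ‖((τ : ℂ) + (∑ j, c₀ j * (ξ j : ℂ)) +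
            (∑ k, d₀ k * ((α k : ℂ) / 2)) - Complex.I * q)‖) := by
  exact ⟨fwd c₀ d₀ q, bwd c₀ d₀ q⟩
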